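/- Any w = [w1, w2, w3] ∈ W1 minimizing the worst-context population exponential loss max{ E_{P_{c1}}[exp(−y·wᵀx)], E_{P_{c2}}[exp(−y·wᵀx)] } over W1 satisfies w3 = 0 and w1, w2 ∈ span{μ}; that is, the conDRO solution lies in the two-dimensional subspace spanned by [μ, 0_d, 0_d] and [0_d, μ, 0_d]. -/

import Mathlib

open MeasureTheory ProbabilityTheory Real Filter
open scoped ENNReal NNReal

noncomputable section

/-- Complementary error function `erfc x = (2/√π) ∫_x^∞ e^{−t²} dt`. -/
def erfc (x : ℝ) : ℝ := 2 / Real.sqrt Real.pi * ∫ t in Set.Ioi x, Real.exp (-t ^ 2)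

/-- A vector in `ℝ^d`. -/
abbrev Vec (d : ℕ) := Fin d → ℝ

/-- The input space `ℝ^{3d}`, viewed as three blocks `x = [x1, x2, x3]`. -/
abbrev Inp (d : ℕ) := Vec d × Vec d × Vec d

/-- Euclidean dot product on `ℝ^d`. -/
def dot {d : ℕ} (v w : Vec d) : ℝ := ∑ i, v i * w i

/-- Euclidean norm on `ℝ^d`. -/
def vnorm {d : ℕ} (v : Vec d) : ℝ := Real.sqrt (∑ i, v i ^ 2)

/-- Euclidean norm on the full input space `ℝ^{3d}`. -/
def xnorm {d : ℕ} (x : Inp d) : ℝ :=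
  Real.sqrt ((∑ i, x.1 i ^ 2) + (∑ i, x.2.1 i ^ 2) + ∑ i, x.2.2 i ^ 2)

/-- Value `wᵀx` of the linear predictor `w` at input `x`. -/
def pred {d : ℕ} (w x : Inp d) : ℝ := dot w.1 x.1 + dot w.2.1 x.2.1 + dot w.2.2 x.2.2

/-- Isotropic Gaussian `N(m, v·I_d)` on `ℝ^d` (product of coordinate Gaussians). -/
def gaussVec (d : ℕ) (m : Vec d) (v : ℝ) : Measure (Vec d) :=
  Measure.pi fun i => gaussianReal (m i) (Real.toNNReal v)

/-- Conditional law of `x` given the label `y` in context `c1`: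
`x1 ~ N(μy, σ²I)`, `x2 ~ N(μy, γσ²I)`, `x3 ~ N(μ, η²I)`, independent blocks. -/
def condX1 (d : ℕ) (μ : Vec d) (σ γ η : ℝ) (y : ℝ) : Measure (Inp d) :=
  (gaussVec d (fun i => μ i * y) (σ ^ 2)).prod
    ((gaussVec d (fun i => μ i * y) (γ * σ ^ 2)).prod
      (gaussVec d μ (η ^ 2)))

/-- Conditional law of `x` given the label `y` in context `c2`:
`x1 ~ N(μy, σ²I)`, `x2 ~ N(−μy, (σ²/γ)I)`, `x3 ~ N(−μ, η²I)`, independent blocks. -/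
def condX2 (d : ℕ) (μ : Vec d) (σ γ η : ℝ) (y : ℝ) : Measure (Inp d) :=
  (gaussVec d (fun i => μ i * y) (σ ^ 2)).prod
    ((gaussVec d (fun i => -μ i * y) (σ ^ 2 / γ)).prod
      (gaussVec d (fun i => -μ i) (η ^ 2)))

/-- Joint law of `(x, y)`: `y` uniform on `{−1, 1}`, then `x ~ cond y`. -/
def jointOf {d : ℕ} (cond : ℝ → Measure (Inp d)) : Measure (Inp d × ℝ) :=
  (2 : ℝ≥0∞)⁻¹ • (cond 1).prod (Measure.dirac (1 : ℝ))
    + (2 : ℝ≥0∞)⁻¹ • (cond (-1)).prod (Measure.dirac (-1 : ℝ))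

/-- The context-`c1` distribution over `(x, y)`. -/
def Pc1 (d : ℕ) (μ : Vec d) (σ γ η : ℝ) : Measure (Inp d × ℝ) :=
  jointOf (condX1 d μ σ γ η)

/-- The context-`c2` distribution over `(x, y)`. -/
def Pc2 (d : ℕ) (μ : Vec d) (σ γ η : ℝ) : Measure (Inp d × ℝ) :=
  jointOf (condX2 d μ σ γ η)

/-- Accuracy `Acc_P(w) = P(sign(wᵀx) = y)` of linear predictor `w` under joint law `P`. -/
def AccP {d : ℕ} (P : Measure (Inp d × ℝ)) (w : Inp d) : ℝ :=
  (P {p | Real.sign (pred w p.1) = p.2}).toReal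

/-- Norm-bounded linear predictors `W1 = {w ∈ ℝ^{3d} : ‖w‖₂ ≤ 1}`. -/
def W1 (d : ℕ) : Set (Inp d) := {w | xnorm w ≤ 1}

/-- Population exponential loss `E_P[exp(−y·wᵀx)]`. -/
def expLoss {d : ℕ} (P : Measure (Inp d × ℝ)) (w : Inp d) : ℝ :=
  ∫ p, Real.exp (-(p.2 * pred w p.1)) ∂P

end

section CondroAux
open MeasureTheory ProbabilityTheory Real
open scoped ENNReal NNReal

variable {d : ℕ}

instance gaussVec_prob (m : Vec d) (v : ℝ) : IsProbabilityMeasure (gaussVec d m v) := by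
  unfold gaussVec; infer_instance

lemma pdf_mul_exp (m : ℝ) {v : ℝ} (hv : 0 < v) (c x : ℝ) :
    gaussianPDFReal m v.toNNReal x * Real.exp (c * x)
      = Real.exp (c * m + v * c ^ 2 / 2) * gaussianPDFReal (m + c * v) v.toNNReal x := by
  simp only [gaussianPDFReal, Real.coe_toNNReal v hv.le]
  have key : rexp (-(x - m)^2/(2*v)) * rexp (c * x)
      = rexp (c*m + v*c^2/2) * rexp (-(x-(m+c*v))^2/(2*v)) := by
    rw [← Real.exp_add, ← Real.exp_add]; congr 1; field_simp; ring
  linear_combination (Real.sqrt (2*π*v))⁻¹ * key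

lemma gauss_mgf (c m : ℝ) {v : ℝ} (hv : 0 < v) :
    ∫ x, Real.exp (c * x) ∂gaussianReal m v.toNNReal
      = Real.exp (c * m + v * c ^ 2 / 2) := by
  have hv' : v.toNNReal ≠ 0 := by simp [Real.toNNReal_eq_zero, not_le, hv]
  rw [gaussianReal_of_var_ne_zero m hv']
  have hd : gaussianPDF m v.toNNReal
      = fun x => (((gaussianPDFReal m v.toNNReal x).toNNReal : ℝ≥0) : ℝ≥0∞) := rfl
  rw [hd, integral_withDensity_eq_integral_smul
    ((measurable_gaussianPDFReal m v.toNNReal).real_toNNReal)]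
  have : ∀ x : ℝ, (gaussianPDFReal m v.toNNReal x).toNNReal • Real.exp (c * x)
      = Real.exp (c * m + v * c ^ 2 / 2) * gaussianPDFReal (m + c * v) v.toNNReal x := by
    intro x
    rw [NNReal.smul_def, smul_eq_mul, Real.coe_toNNReal _ (gaussianPDFReal_nonneg _ _ _),
      pdf_mul_exp m hv c x]
  simp_rw [this]
  rw [integral_const_mul, integral_gaussianPDFReal_eq_one _ hv', mul_one]

lemma gauss_exp_integrable (c m : ℝ) {v : ℝ} (hv : 0 < v) :
    Integrable (fun x => Real.exp (c * x)) (gaussianReal m v.toNNReal) := by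
  have hv' : v.toNNReal ≠ 0 := by simp [Real.toNNReal_eq_zero, not_le, hv]
  rw [gaussianReal_of_var_ne_zero m hv']
  have hd : gaussianPDF m v.toNNReal
      = fun x => (((gaussianPDFReal m v.toNNReal x).toNNReal : ℝ≥0) : ℝ≥0∞) := rfl
  rw [hd, integrable_withDensity_iff_integrable_smul
    ((measurable_gaussianPDFReal m v.toNNReal).real_toNNReal)]
  have : (fun x : ℝ => (gaussianPDFReal m v.toNNReal x).toNNReal • Real.exp (c * x))
      = fun x => Real.exp (c * m + v * c ^ 2 / 2) * gaussianPDFReal (m + c * v) v.toNNReal x := by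
    funext x
    rw [NNReal.smul_def, smul_eq_mul, Real.coe_toNNReal _ (gaussianPDFReal_nonneg _ _ _),
      pdf_mul_exp m hv c x]
  rw [this]
  exact (integrable_gaussianPDFReal _ _).const_mul _

lemma integral_pi_prod (μs : Fin d → Measure ℝ) (h : ∀ i, SigmaFinite (μs i))
    (f : Fin d → ℝ → ℝ) :
    ∫ x : Fin d → ℝ, ∏ i, f i (x i) ∂Measure.pi μs = ∏ i, ∫ x, f i x ∂μs i :=
  by haveI := h; exact integral_fintype_prod_eq_prod f

lemma integrable_pi_prod (μs : Fin d → Measure ℝ) (h : ∀ i, SigmaFinite (μs i))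
    (f : Fin d → ℝ → ℝ) (hf : ∀ i, Integrable (f i) (μs i)) :
    Integrable (fun x : Fin d → ℝ => ∏ i, f i (x i)) (Measure.pi μs) :=
  by haveI := h; exact Integrable.fintype_prod_dep hf

lemma gaussVec_mgf (m t : Vec d) {v : ℝ} (hv : 0 < v) :
    ∫ x, Real.exp (dot t x) ∂gaussVec d m v
      = Real.exp (dot t m + v * (∑ i, t i ^ 2) / 2) := by
  have h1 : ∀ x : Vec d, Real.exp (dot t x) = ∏ i, Real.exp (t i * x i) := fun x => by
    rw [← Real.exp_sum]; rfl
  simp_rw [h1, gaussVec]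
  rw [integral_pi_prod (fun i => gaussianReal (m i) v.toNNReal) (fun i => inferInstance)
    (fun i x => Real.exp (t i * x))]
  rw [Finset.prod_congr rfl fun i _ => gauss_mgf (t i) (m i) hv, ← Real.exp_sum]
  congr 1
  rw [Finset.sum_add_distrib]
  congr 1
  rw [← Finset.sum_div, ← Finset.mul_sum]

lemma gaussVec_exp_integrable (m t : Vec d) {v : ℝ} (hv : 0 < v) :
    Integrable (fun x => Real.exp (dot t x)) (gaussVec d m v) := by
  have h1 : (fun x : Vec d => Real.exp (dot t x)) = fun x => ∏ i, Real.exp (t i * x i) :=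
    funext fun x => by rw [← Real.exp_sum]; rfl
  rw [h1, gaussVec]
  exact integrable_pi_prod (fun i => gaussianReal (m i) v.toNNReal) (fun i => inferInstance)
    (fun i x => Real.exp (t i * x)) (fun i => gauss_exp_integrable _ _ hv)

lemma trip_mgf (t1 t2 t3 m1 m2 m3 : Vec d) {v1 v2 v3 : ℝ}
    (h1 : 0 < v1) (h2 : 0 < v2) (h3 : 0 < v3) :
    ∫ x : Inp d, Real.exp (dot t1 x.1 + dot t2 x.2.1 + dot t3 x.2.2)
        ∂((gaussVec d m1 v1).prod ((gaussVec d m2 v2).prod (gaussVec d m3 v3)))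
      = Real.exp ((dot t1 m1 + v1 * (∑ i, t1 i ^ 2) / 2)
          + ((dot t2 m2 + v2 * (∑ i, t2 i ^ 2) / 2)
          + (dot t3 m3 + v3 * (∑ i, t3 i ^ 2) / 2))) := by
  have h : ∀ x : Inp d, Real.exp (dot t1 x.1 + dot t2 x.2.1 + dot t3 x.2.2)
      = (fun a => Real.exp (dot t1 a)) x.1 *
        ((fun z : Vec d × Vec d => Real.exp (dot t2 z.1) * Real.exp (dot t3 z.2)) x.2) := by
    intro x
    simp only [← Real.exp_add]
    congr 1
    ring
  simp_rw [h]
  rw [integral_prod_mul (f := fun a => Real.exp (dot t1 a))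
      (g := fun z : Vec d × Vec d => Real.exp (dot t2 z.1) * Real.exp (dot t3 z.2)),
    integral_prod_mul (f := fun a => Real.exp (dot t2 a))
      (g := fun z : Vec d => Real.exp (dot t3 z)),
    gaussVec_mgf _ _ h1, gaussVec_mgf _ _ h2,
    gaussVec_mgf _ _ h3, ← Real.exp_add, ← Real.exp_add]

lemma trip_integrable (t1 t2 t3 m1 m2 m3 : Vec d) {v1 v2 v3 : ℝ}
    (h1 : 0 < v1) (h2 : 0 < v2) (h3 : 0 < v3) :
    Integrable (fun x : Inp d => Real.exp (dot t1 x.1 + dot t2 x.2.1 + dot t3 x.2.2))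
      ((gaussVec d m1 v1).prod ((gaussVec d m2 v2).prod (gaussVec d m3 v3))) := by
  have h : (fun x : Inp d => Real.exp (dot t1 x.1 + dot t2 x.2.1 + dot t3 x.2.2))
      = fun x : Inp d => (fun a => Real.exp (dot t1 a)) x.1 *
        ((fun z : Vec d × Vec d => Real.exp (dot t2 z.1) * Real.exp (dot t3 z.2)) x.2) := by
    funext x
    simp only [← Real.exp_add]
    congr 1
    ring
  rw [h]
  exact (gaussVec_exp_integrable _ _ h1).mul_prod
    ((gaussVec_exp_integrable _ _ h2).mul_prod (gaussVec_exp_integrable _ _ h3))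

lemma exp_pred_fun_eq (w : Inp d) (y : ℝ) :
    (fun x : Inp d => Real.exp (-(y * pred w x)))
      = fun x => Real.exp (dot (fun i => -y * w.1 i) x.1 + dot (fun i => -y * w.2.1 i) x.2.1
          + dot (fun i => -y * w.2.2 i) x.2.2) := by
  have hs : ∀ (v u : Vec d), dot (fun i => -y * v i) u = -y * dot v u := by
    intro v u
    simp only [dot, Finset.mul_sum]
    exact Finset.sum_congr rfl fun i _ => by ring
  funext x
  rw [hs, hs, hs]
  congr 1
  simp only [pred]
  ring

lemma dot_scale (a b : ℝ) (v u : Vec d) :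
    dot (fun i => a * v i) (fun i => u i * b) = (a * b) * dot v u := by
  simp only [dot, Finset.mul_sum]
  exact Finset.sum_congr rfl fun i _ => by ring

lemma dot_scale1 (a : ℝ) (v u : Vec d) : dot (fun i => a * v i) u = a * dot v u := by
  simp only [dot, Finset.mul_sum]
  exact Finset.sum_congr rfl fun i _ => by ring

lemma dot_scale_negr (a b : ℝ) (v u : Vec d) :
    dot (fun i => a * v i) (fun i => -u i * b) = (-(a * b)) * dot v u := by
  simp only [dot, Finset.mul_sum]
  exact Finset.sum_congr rfl fun i _ => by ring

lemma dot_scale_neg1 (a : ℝ) (v u : Vec d) :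
    dot (fun i => a * v i) (fun i => -u i) = (-a) * dot v u := by
  simp only [dot, Finset.mul_sum]
  exact Finset.sum_congr rfl fun i _ => by ring

lemma sumsq_scale (a : ℝ) (v : Vec d) : ∑ i, (a * v i) ^ 2 = a ^ 2 * ∑ i, v i ^ 2 := by
  rw [Finset.mul_sum]
  exact Finset.sum_congr rfl fun i _ => by ring

lemma measurable_expF (w : Inp d) :
    Measurable (fun p : Inp d × ℝ => Real.exp (-(p.2 * pred w p.1))) := by
  have hpred : Measurable (fun x : Inp d => pred w x) := by
    unfold pred dot
    exact (((Finset.measurable_sum _ fun i _ =>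
        (measurable_const.mul ((measurable_pi_apply i).comp measurable_fst))).add
      (Finset.measurable_sum _ fun i _ =>
        (measurable_const.mul ((measurable_pi_apply i).comp
          (measurable_fst.comp measurable_snd))))).add
      (Finset.measurable_sum _ fun i _ =>
        (measurable_const.mul ((measurable_pi_apply i).comp
          (measurable_snd.comp measurable_snd)))))
  exact ((measurable_snd.mul (hpred.comp measurable_fst)).neg).exp

lemma expLoss_jointOf (cond : ℝ → Measure (Inp d)) (w : Inp d)
    (hs1 : SFinite (cond 1)) (hs2 : SFinite (cond (-1)))
    (h1 : Integrable (fun x => Real.exp (-((1:ℝ) * pred w x))) (cond 1))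
    (h2 : Integrable (fun x => Real.exp (-((-1:ℝ) * pred w x))) (cond (-1))) :
    expLoss (jointOf cond) w
      = ((∫ x, Real.exp (-((1:ℝ) * pred w x)) ∂cond 1)
        + ∫ x, Real.exp (-((-1:ℝ) * pred w x)) ∂cond (-1)) / 2 := by
  have hF : Measurable (fun p : Inp d × ℝ => Real.exp (-(p.2 * pred w p.1))) := measurable_expF w
  have hg1 : Measurable (fun x : Inp d => (x, (1:ℝ))) := measurable_prodMk_right
  have hg2 : Measurable (fun x : Inp d => (x, (-1:ℝ))) := measurable_prodMk_right
  haveI := hs1; haveI := hs2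
  have hne : ((2:ℝ≥0∞)⁻¹ ≠ ⊤) := by simp
  unfold expLoss jointOf
  rw [Measure.prod_dirac, Measure.prod_dirac]
  have hi1 : Integrable (fun p : Inp d × ℝ => Real.exp (-(p.2 * pred w p.1)))
      ((cond 1).map (fun x => (x, (1:ℝ)))) := by
    rw [integrable_map_measure hF.aestronglyMeasurable hg1.aemeasurable]
    exact h1
  have hi2 : Integrable (fun p : Inp d × ℝ => Real.exp (-(p.2 * pred w p.1)))
      ((cond (-1)).map (fun x => (x, (-1:ℝ)))) := by
    rw [integrable_map_measure hF.aestronglyMeasurable hg2.aemeasurable]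
    exact h2
  rw [integral_add_measure (hi1.smul_measure hne) (hi2.smul_measure hne),
    integral_smul_measure, integral_smul_measure,
    integral_map hg1.aemeasurable hF.aestronglyMeasurable,
    integral_map hg2.aemeasurable hF.aestronglyMeasurable]
  simp only [smul_eq_mul]
  rw [ENNReal.toReal_inv]
  norm_num
  ring

end CondroAux


section CondroAux2
open MeasureTheory ProbabilityTheory Real
open scoped ENNReal NNReal

variable {d : ℕ}

lemma expLoss_Pc1_eq (μ : Vec d) {σ γ η : ℝ} (hσ : 0 < σ) (hγ : 0 < γ) (hη : 0 < η) (w : Inp d) :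
    expLoss (Pc1 d μ σ γ η) w
      = (Real.exp (-dot w.1 μ - dot w.2.1 μ - dot w.2.2 μ
            + (σ^2 * (∑ i, w.1 i ^ 2) + γ*σ^2 * (∑ i, w.2.1 i ^ 2)
              + η^2 * (∑ i, w.2.2 i ^ 2))/2)
        + Real.exp (-dot w.1 μ - dot w.2.1 μ + dot w.2.2 μ
            + (σ^2 * (∑ i, w.1 i ^ 2) + γ*σ^2 * (∑ i, w.2.1 i ^ 2)
              + η^2 * (∑ i, w.2.2 i ^ 2))/2)) / 2 := by
  have hv1 : (0:ℝ) < σ^2 := by positivity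
  have hv2 : (0:ℝ) < γ*σ^2 := by positivity
  have hv3 : (0:ℝ) < η^2 := by positivity
  have hs : ∀ y : ℝ, SFinite (condX1 d μ σ γ η y) := by
    intro y; unfold condX1; infer_instance
  have hint : ∀ y : ℝ, Integrable (fun x => Real.exp (-(y * pred w x))) (condX1 d μ σ γ η y) := by
    intro y
    rw [exp_pred_fun_eq w y]
    unfold condX1
    exact trip_integrable _ _ _ _ _ _ hv1 hv2 hv3
  unfold Pc1
  rw [expLoss_jointOf _ w (hs 1) (hs (-1)) (hint 1) (hint (-1)),
    exp_pred_fun_eq w 1, exp_pred_fun_eq w (-1)]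
  unfold condX1
  rw [trip_mgf (fun i => -(1:ℝ) * w.1 i) (fun i => -(1:ℝ) * w.2.1 i) (fun i => -(1:ℝ) * w.2.2 i)
      (fun i => μ i * 1) (fun i => μ i * 1) μ hv1 hv2 hv3,
    trip_mgf (fun i => -(-1:ℝ) * w.1 i) (fun i => -(-1:ℝ) * w.2.1 i) (fun i => -(-1:ℝ) * w.2.2 i)
      (fun i => μ i * (-1)) (fun i => μ i * (-1)) μ hv1 hv2 hv3,
    dot_scale, dot_scale, dot_scale1, dot_scale, dot_scale, dot_scale1,
    sumsq_scale, sumsq_scale, sumsq_scale, sumsq_scale, sumsq_scale, sumsq_scale]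
  norm_num
  ring_nf

lemma expLoss_Pc2_eq (μ : Vec d) {σ γ η : ℝ} (hσ : 0 < σ) (hγ : 0 < γ) (hη : 0 < η) (w : Inp d) :
    expLoss (Pc2 d μ σ γ η) w
      = (Real.exp (-dot w.1 μ + dot w.2.1 μ - dot w.2.2 μ
            + (σ^2 * (∑ i, w.1 i ^ 2) + σ^2/γ * (∑ i, w.2.1 i ^ 2)
              + η^2 * (∑ i, w.2.2 i ^ 2))/2)
        + Real.exp (-dot w.1 μ + dot w.2.1 μ + dot w.2.2 μ
            + (σ^2 * (∑ i, w.1 i ^ 2) + σ^2/γ * (∑ i, w.2.1 i ^ 2)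
              + η^2 * (∑ i, w.2.2 i ^ 2))/2)) / 2 := by
  have hv1 : (0:ℝ) < σ^2 := by positivity
  have hv2 : (0:ℝ) < σ^2/γ := by positivity
  have hv3 : (0:ℝ) < η^2 := by positivity
  have hs : ∀ y : ℝ, SFinite (condX2 d μ σ γ η y) := by
    intro y; unfold condX2; infer_instance
  have hint : ∀ y : ℝ, Integrable (fun x => Real.exp (-(y * pred w x))) (condX2 d μ σ γ η y) := by
    intro y
    rw [exp_pred_fun_eq w y]
    unfold condX2
    exact trip_integrable _ _ _ _ _ _ hv1 hv2 hv3
  unfold Pc2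
  rw [expLoss_jointOf _ w (hs 1) (hs (-1)) (hint 1) (hint (-1)),
    exp_pred_fun_eq w 1, exp_pred_fun_eq w (-1)]
  unfold condX2
  rw [trip_mgf (fun i => -(1:ℝ) * w.1 i) (fun i => -(1:ℝ) * w.2.1 i) (fun i => -(1:ℝ) * w.2.2 i)
      (fun i => μ i * 1) (fun i => -μ i * 1) (fun i => -μ i) hv1 hv2 hv3,
    trip_mgf (fun i => -(-1:ℝ) * w.1 i) (fun i => -(-1:ℝ) * w.2.1 i) (fun i => -(-1:ℝ) * w.2.2 i)
      (fun i => μ i * (-1)) (fun i => -μ i * (-1)) (fun i => -μ i) hv1 hv2 hv3,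
    dot_scale, dot_scale_negr, dot_scale_neg1, dot_scale, dot_scale_negr, dot_scale_neg1,
    sumsq_scale, sumsq_scale, sumsq_scale, sumsq_scale, sumsq_scale, sumsq_scale]
  norm_num
  ring_nf

end CondroAux2


section CondroAux3
open MeasureTheory ProbabilityTheory Real
open scoped ENNReal NNReal

variable {d : ℕ}

lemma sumsq_sub (v u : Vec d) (a : ℝ) :
    ∑ i, (v i - a * u i) ^ 2
      = (∑ i, v i ^ 2) - 2 * a * (∑ i, v i * u i) + a ^ 2 * (∑ i, u i ^ 2) := by
  rw [Finset.mul_sum, Finset.mul_sum, ← Finset.sum_sub_distrib, ← Finset.sum_add_distrib]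
  exact Finset.sum_congr rfl fun i _ => by ring

lemma dot_smul_self (c : ℝ) (u : Vec d) : dot (c • u) u = c * ∑ i, u i ^ 2 := by
  simp only [dot, Pi.smul_apply, smul_eq_mul, Finset.mul_sum]
  exact Finset.sum_congr rfl fun i _ => by ring

lemma sumsq_smul (c : ℝ) (u : Vec d) : ∑ i, (c • u) i ^ 2 = c ^ 2 * ∑ i, u i ^ 2 := by
  simp only [Pi.smul_apply, smul_eq_mul, Finset.mul_sum]
  exact Finset.sum_congr rfl fun i _ => by ring

lemma exp_avg_lt (u t s0 s1 : ℝ) (h : s0 < s1) :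
    (Real.exp (u - 0 + s0) + Real.exp (u + 0 + s0)) / 2
      < (Real.exp (u - t + s1) + Real.exp (u + t + s1)) / 2 := by
  have key1 : 2 * Real.exp (u + s1) ≤ Real.exp (u - t + s1) + Real.exp (u + t + s1) := by
    have ea : Real.exp (u - t + s1) = Real.exp (u + s1) * Real.exp (-t) := by
      rw [← Real.exp_add]; congr 1; ring
    have eb : Real.exp (u + t + s1) = Real.exp (u + s1) * Real.exp t := by
      rw [← Real.exp_add]; congr 1; ring
    have h2 : (2:ℝ) ≤ Real.exp (-t) + Real.exp t := by
      nlinarith [Real.add_one_le_exp t, Real.add_one_le_exp (-t)]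
    have h4 := mul_nonneg (Real.exp_pos (u + s1)).le
      (by linarith : (0:ℝ) ≤ Real.exp (-t) + Real.exp t - 2)
    rw [ea, eb]
    nlinarith [h4]
  have h3 : Real.exp (u + s0) < Real.exp (u + s1) := Real.exp_lt_exp.mpr (by linarith)
  have e1 : u - 0 + s0 = u + s0 := by ring
  have e2 : u + 0 + s0 = u + s0 := by ring
  rw [e1, e2]
  linarith

lemma gap_helper {c1 c2 c3 d1 d2 d3 : ℝ} (hc1 : 0 < c1) (hc2 : 0 < c2) (hc3 : 0 < c3)
    (h1 : 0 ≤ d1) (h2 : 0 ≤ d2) (h3 : 0 ≤ d3) (hs : 0 < d1 + d2 + d3) :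
    0 < c1*d1 + c2*d2 + c3*d3 := by
  have hone : 0 < d1 ∨ 0 < d2 ∨ 0 < d3 := by
    by_contra hh; push_neg at hh; linarith [hh.1, hh.2.1, hh.2.2]
  rcases hone with h | h | h
  · nlinarith [mul_pos hc1 h, mul_nonneg hc2.le h2, mul_nonneg hc3.le h3]
  · nlinarith [mul_pos hc2 h, mul_nonneg hc1.le h1, mul_nonneg hc3.le h3]
  · nlinarith [mul_pos hc3 h, mul_nonneg hc1.le h1, mul_nonneg hc2.le h2]

lemma eq_smul_of_CS (v u : Vec d) (hM : 0 < ∑ i, u i ^ 2)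
    (h : (∑ i, v i ^ 2) = (dot v u) ^ 2 / ∑ i, u i ^ 2) :
    v = (dot v u / ∑ i, u i ^ 2) • u := by
  have hz : ∑ i, (v i - (dot v u / ∑ i, u i ^ 2) * u i) ^ 2 = 0 := by
    rw [sumsq_sub]
    have hdd : ∑ i, v i * u i = dot v u := rfl
    rw [hdd, h, div_pow]
    field_simp
    ring
  funext i
  have h0 := (Finset.sum_eq_zero_iff_of_nonneg
    (fun j _ => sq_nonneg (v j - (dot v u / ∑ i, u i ^ 2) * u j))).mp hz i (Finset.mem_univ i)
  have h0' := pow_eq_zero_iff (n := 2) (by norm_num) |>.mp h0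
  have hvi := sub_eq_zero.mp h0'
  simpa [Pi.smul_apply, smul_eq_mul] using hvi

end CondroAux3


set_option maxHeartbeats 1000000 in
theorem condro_solution_in_subspace (d : ℕ) (hd : 1 ≤ d) (μ : Vec d) (hμ : μ ≠ 0)
    (σ γ η : ℝ) (hσ : 0 < σ) (hγ : 0 < γ) (hη : 0 < η)
    (w : Inp d) (hmem : w ∈ W1 d)
    (hmin : ∀ w' ∈ W1 d,
      max (expLoss (Pc1 d μ σ γ η) w) (expLoss (Pc2 d μ σ γ η) w)
        ≤ max (expLoss (Pc1 d μ σ γ η) w') (expLoss (Pc2 d μ σ γ η) w')) :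
    w.2.2 = 0 ∧ (∃ a : ℝ, w.1 = a • μ) ∧ (∃ b : ℝ, w.2.1 = b • μ) := by
  classical
  have hM : 0 < ∑ i, μ i ^ 2 := by
    have hex : ∃ i, μ i ≠ 0 := by
      by_contra h; push_neg at h; exact hμ (funext h)
    obtain ⟨i0, hi0⟩ := hex
    exact Finset.sum_pos' (fun i _ => sq_nonneg _) ⟨i0, Finset.mem_univ _, by positivity⟩
  have hCS1 : (dot w.1 μ) ^ 2 ≤ (∑ i, w.1 i ^ 2) * ∑ i, μ i ^ 2 :=
    Finset.sum_mul_sq_le_sq_mul_sq Finset.univ w.1 μ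
  have hCS2 : (dot w.2.1 μ) ^ 2 ≤ (∑ i, w.2.1 i ^ 2) * ∑ i, μ i ^ 2 :=
    Finset.sum_mul_sq_le_sq_mul_sq Finset.univ w.2.1 μ
  have hd1 : 0 ≤ (∑ i, w.1 i ^ 2) - (dot w.1 μ) ^ 2 / (∑ i, μ i ^ 2) := by
    rw [sub_nonneg, div_le_iff₀ hM]; exact hCS1
  have hd2 : 0 ≤ (∑ i, w.2.1 i ^ 2) - (dot w.2.1 μ) ^ 2 / (∑ i, μ i ^ 2) := by
    rw [sub_nonneg, div_le_iff₀ hM]; exact hCS2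
  have hd3 : (0:ℝ) ≤ ∑ i, w.2.2 i ^ 2 := Finset.sum_nonneg fun i _ => sq_nonneg _
  set a : ℝ := dot w.1 μ / ∑ i, μ i ^ 2 with ha
  set b : ℝ := dot w.2.1 μ / ∑ i, μ i ^ 2 with hb
  have key : (∑ i, w.2.2 i ^ 2) = 0
      ∧ (∑ i, w.1 i ^ 2) = (dot w.1 μ) ^ 2 / (∑ i, μ i ^ 2)
      ∧ (∑ i, w.2.1 i ^ 2) = (dot w.2.1 μ) ^ 2 / (∑ i, μ i ^ 2) := by
    by_contra hcon
    have hstrict : 0 < ((∑ i, w.1 i ^ 2) - (dot w.1 μ) ^ 2 / (∑ i, μ i ^ 2))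
        + ((∑ i, w.2.1 i ^ 2) - (dot w.2.1 μ) ^ 2 / (∑ i, μ i ^ 2)) + ∑ i, w.2.2 i ^ 2 := by
      rcases lt_or_eq_of_le hd1 with h1 | h1
      · linarith
      rcases lt_or_eq_of_le hd2 with h2 | h2
      · linarith
      rcases lt_or_eq_of_le hd3 with h3 | h3
      · linarith
      exact absurd ⟨h3.symm, by linarith, by linarith⟩ hcon
    set w' : Inp d := (a • μ, b • μ, (0 : Vec d)) with hw'
    have hdot1' : dot w'.1 μ = dot w.1 μ := by
      rw [hw']
      show dot (a • μ) μ = dot w.1 μ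
      rw [dot_smul_self, ha]
      field_simp
    have hdot2' : dot w'.2.1 μ = dot w.2.1 μ := by
      rw [hw']
      show dot (b • μ) μ = dot w.2.1 μ
      rw [dot_smul_self, hb]
      field_simp
    have hdot3' : dot w'.2.2 μ = 0 := by
      rw [hw']
      show dot (0 : Vec d) μ = 0
      simp [dot]
    have hsq1' : ∑ i, w'.1 i ^ 2 = (dot w.1 μ) ^ 2 / (∑ i, μ i ^ 2) := by
      rw [hw']
      show ∑ i, (a • μ) i ^ 2 = _
      rw [sumsq_smul, ha]
      field_simp
    have hsq2' : ∑ i, w'.2.1 i ^ 2 = (dot w.2.1 μ) ^ 2 / (∑ i, μ i ^ 2) := by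
      rw [hw']
      show ∑ i, (b • μ) i ^ 2 = _
      rw [sumsq_smul, hb]
      field_simp
    have hsq3' : ∑ i, w'.2.2 i ^ 2 = 0 := by
      rw [hw']
      show ∑ i, (0 : Vec d) i ^ 2 = (0:ℝ)
      simp
    have hw'mem : w' ∈ W1 d := by
      have hxn : xnorm w' ≤ xnorm w := by
        unfold xnorm
        apply Real.sqrt_le_sqrt
        have e1 : (∑ i, w'.1 i ^ 2) + (∑ i, w'.2.1 i ^ 2) + ∑ i, w'.2.2 i ^ 2
            = (dot w.1 μ) ^ 2 / (∑ i, μ i ^ 2) + (dot w.2.1 μ) ^ 2 / (∑ i, μ i ^ 2) + 0 := by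
          rw [hsq1', hsq2', hsq3']
        rw [e1]
        linarith
      exact le_trans hxn hmem
    have hsgap : (σ^2 * ((dot w.1 μ) ^ 2 / (∑ i, μ i ^ 2))
          + γ*σ^2 * ((dot w.2.1 μ) ^ 2 / (∑ i, μ i ^ 2)) + η^2 * 0) / 2
        < (σ^2 * (∑ i, w.1 i ^ 2) + γ*σ^2 * (∑ i, w.2.1 i ^ 2) + η^2 * (∑ i, w.2.2 i ^ 2)) / 2 := by
      have := gap_helper (by positivity : (0:ℝ) < σ^2) (by positivity : (0:ℝ) < γ*σ^2)
        (by positivity : (0:ℝ) < η^2) hd1 hd2 hd3 hstrict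
      nlinarith [this]
    have hsgap2 : (σ^2 * ((dot w.1 μ) ^ 2 / (∑ i, μ i ^ 2))
          + σ^2/γ * ((dot w.2.1 μ) ^ 2 / (∑ i, μ i ^ 2)) + η^2 * 0) / 2
        < (σ^2 * (∑ i, w.1 i ^ 2) + σ^2/γ * (∑ i, w.2.1 i ^ 2) + η^2 * (∑ i, w.2.2 i ^ 2)) / 2 := by
      have := gap_helper (by positivity : (0:ℝ) < σ^2) (by positivity : (0:ℝ) < σ^2/γ)
        (by positivity : (0:ℝ) < η^2) hd1 hd2 hd3 hstrict
      nlinarith [this]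
    have hL1w := expLoss_Pc1_eq μ hσ hγ hη w
    have hL1w' := expLoss_Pc1_eq μ hσ hγ hη w'
    have hL2w := expLoss_Pc2_eq μ hσ hγ hη w
    have hL2w' := expLoss_Pc2_eq μ hσ hγ hη w'
    rw [hdot1', hdot2', hdot3', hsq1', hsq2', hsq3'] at hL1w' hL2w'
    have h1 : expLoss (Pc1 d μ σ γ η) w' < expLoss (Pc1 d μ σ γ η) w := by
      rw [hL1w, hL1w']
      exact exp_avg_lt _ _ _ _ hsgap
    have h2 : expLoss (Pc2 d μ σ γ η) w' < expLoss (Pc2 d μ σ γ η) w := by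
      rw [hL2w, hL2w']
      exact exp_avg_lt _ _ _ _ hsgap2
    have hlt : max (expLoss (Pc1 d μ σ γ η) w') (expLoss (Pc2 d μ σ γ η) w')
        < max (expLoss (Pc1 d μ σ γ η) w) (expLoss (Pc2 d μ σ γ η) w) :=
      max_lt (h1.trans_le (le_max_left _ _)) (h2.trans_le (le_max_right _ _))
    exact absurd hlt (not_lt.mpr (hmin w' hw'mem))
  obtain ⟨k3, k1, k2⟩ := key
  refine ⟨?_, ⟨a, ?_⟩, ⟨b, ?_⟩⟩
  · funext i
    have h0 := (Finset.sum_eq_zero_iff_of_nonneg (fun i _ => sq_nonneg (w.2.2 i))).mp k3 i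
      (Finset.mem_univ i)
    have h0' := pow_eq_zero_iff (n := 2) (by norm_num) |>.mp h0
    simpa using h0'
  · rw [ha]
    exact eq_smul_of_CS w.1 μ hM k1
  · rw [hb]
    exact eq_smul_of_CS w.2.1 μ hM k2
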